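/- For pairwise disjoint finite sets J_1, …, J_m ⊆ ℕ, the moments satisfy ⟨J_1 ∪ ⋯ ∪ J_m⟩ = Σ_{I ∈ P{1,…,m}} Π_{blocks I_l of I} [ Σ_{Q_l ∈ P_c(J_q : q ∈ I_l)} Π_{blocks Q of Q_l} ⟨Q⟩^T ], i.e., the moment factorizes over the decomposition into connected components: every partition R of ⋃_l J_l decomposes uniquely as a disjoint union of connected partitions of sub-collections of the blocks. -/

import Mathlib

open scoped BigOperators

/-- The finset of all partitions of a finite set `J`. -/
def partitionsOf {α : Type*} [DecidableEq α] (J : Finset α) : Finset (Finset (Finset α)) :=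
  J.powerset.powerset.filter
    (fun P => ∅ ∉ P ∧ (∀ a ∈ P, ∀ b ∈ P, a ≠ b → a ∩ b = ∅) ∧ P.biUnion id = J)

/-- The moment of `J₁ ∪ ⋯ ∪ Jₘ` factorizes over connected components: it is the
sum over partitions `I` of the index set `{1,…,m}` of the products, over the
blocks `A` of `I`, of the sums over partitions of `⋃_{q ∈ A} J q` connected
with respect to the blocks `{J q}_{q ∈ A}` of products of truncated moments. -/
lemma mem_partitionsOf {α : Type*} [DecidableEq α] {S : Finset α} {P : Finset (Finset α)} :
    P ∈ partitionsOf S ↔ ∅ ∉ P ∧ (∀ a ∈ P, ∀ b ∈ P, a ≠ b → a ∩ b = ∅) ∧ P.biUnion id = S := by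
  simp only [partitionsOf, Finset.mem_filter, Finset.mem_powerset, and_iff_right_iff_imp]
  rintro ⟨-, -, h⟩ b hb
  rw [Finset.mem_powerset, ← h]
  exact Finset.subset_biUnion_of_mem id hb

section Aux
variable {mm : ℕ}

def pstep (J : Fin mm → Finset ℕ) (P : Finset (Finset ℕ)) (q j : Fin mm) : Prop :=
  ∃ b ∈ P, (b ∩ J q).Nonempty ∧ (b ∩ J j).Nonempty

def prel (J : Fin mm → Finset ℕ) (P : Finset (Finset ℕ)) : Fin mm → Fin mm → Prop :=
  Relation.ReflTransGen (pstep J P)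

lemma prel_refl (J : Fin mm → Finset ℕ) (P : Finset (Finset ℕ)) (q : Fin mm) : prel J P q q :=
  Relation.ReflTransGen.refl

lemma prel_symm (J : Fin mm → Finset ℕ) (P : Finset (Finset ℕ)) : Symmetric (prel J P) :=
  fun x y h => (@Relation.ReflTransGen.stdSymm _ _ ⟨fun _ _ ⟨b, hb, h1, h2⟩ => ⟨b, hb, h2, h1⟩⟩).symm x y h

lemma prel_trans (J : Fin mm → Finset ℕ) (P : Finset (Finset ℕ)) {a b c : Fin mm}
    (h1 : prel J P a b) (h2 : prel J P b c) : prel J P a c :=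
  Relation.ReflTransGen.trans h1 h2

noncomputable def comp (J : Fin mm → Finset ℕ) (P : Finset (Finset ℕ)) (q : Fin mm) :
    Finset (Fin mm) :=
  @Finset.filter _ (fun j => prel J P q j) (Classical.decPred _) Finset.univ

lemma mem_comp {J : Fin mm → Finset ℕ} {P : Finset (Finset ℕ)} {q j : Fin mm} :
    j ∈ comp J P q ↔ prel J P q j := by
  simp [comp]

lemma comp_eq_of_rel {J : Fin mm → Finset ℕ} {P : Finset (Finset ℕ)} {q j : Fin mm}
    (h : prel J P q j) : comp J P q = comp J P j := by
  ext r
  simp only [mem_comp]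
  exact ⟨fun h' => prel_trans J P (prel_symm J P h) h',
    fun h' => prel_trans J P h h'⟩

noncomputable def compPart (J : Fin mm → Finset ℕ) (P : Finset (Finset ℕ)) :
    Finset (Finset (Fin mm)) :=
  Finset.univ.image (comp J P)

lemma compPart_mem (J : Fin mm → Finset ℕ) (P : Finset (Finset ℕ)) :
    compPart J P ∈ partitionsOf (Finset.univ : Finset (Fin mm)) := by
  rw [mem_partitionsOf]
  refine ⟨?_, ?_, ?_⟩
  · intro h
    obtain ⟨q, -, hq⟩ := Finset.mem_image.mp h
    have : q ∈ comp J P q := mem_comp.mpr (prel_refl J P q)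
    rw [hq] at this
    exact absurd this (Finset.notMem_empty q)
  · intro a ha b hb hab
    obtain ⟨q, -, hq⟩ := Finset.mem_image.mp ha
    obtain ⟨j, -, hj⟩ := Finset.mem_image.mp hb
    subst hq hj
    by_contra h
    obtain ⟨r, hr⟩ := Finset.nonempty_iff_ne_empty.mpr h
    rw [Finset.mem_inter, mem_comp, mem_comp] at hr
    exact hab ((comp_eq_of_rel hr.1).trans (comp_eq_of_rel hr.2).symm)
  · apply Finset.eq_univ_of_forall
    intro q
    rw [Finset.mem_biUnion]
    exact ⟨comp J P q, Finset.mem_image_of_mem _ (Finset.mem_univ q),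
      mem_comp.mpr (prel_refl J P q)⟩

end Aux

section Aux2
variable {mm : ℕ} {J : Fin mm → Finset ℕ}
  (hdisj : ∀ l l', l ≠ l' → J l ∩ J l' = ∅)

include hdisj in
lemma idx_unique {x : ℕ} {q r : Fin mm} (hq : x ∈ J q) (hr : x ∈ J r) : q = r := by
  by_contra h
  have := hdisj q r h
  have : x ∈ J q ∩ J r := Finset.mem_inter.mpr ⟨hq, hr⟩
  rw [hdisj q r h] at this
  exact absurd this (Finset.notMem_empty x)

include hdisj in
/-- if `b ⊆ ⋃_{r∈A} J r` and `x ∈ b ∩ J q` then `q ∈ A`. -/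
lemma idx_mem {b : Finset ℕ} {A : Finset (Fin mm)} (hb : b ⊆ A.biUnion J)
    {x : ℕ} {q : Fin mm} (hx : x ∈ b) (hq : x ∈ J q) : q ∈ A := by
  obtain ⟨r, hr, hxr⟩ := Finset.mem_biUnion.mp (hb hx)
  rwa [idx_unique hdisj hq hxr]

include hdisj in
lemma biUnion_disj {A A' : Finset (Fin mm)} (h : A ∩ A' = ∅) {x : ℕ}
    (hx : x ∈ A.biUnion J) (hx' : x ∈ A'.biUnion J) : False := by
  obtain ⟨r, hr, hxr⟩ := Finset.mem_biUnion.mp hx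
  obtain ⟨r', hr', hxr'⟩ := Finset.mem_biUnion.mp hx'
  have := idx_unique hdisj hxr hxr'
  subst this
  have : r ∈ A ∩ A' := Finset.mem_inter.mpr ⟨hr, hr'⟩
  rw [h] at this
  exact absurd this (Finset.notMem_empty r)

/-- Any block of `P` meeting `J q` lies inside the union over the component of `q`. -/
lemma block_subset_comp {P : Finset (Finset ℕ)}
    (hP : P.biUnion id = Finset.univ.biUnion J) {b : Finset ℕ} (hb : b ∈ P)
    {q : Fin mm} (hq : (b ∩ J q).Nonempty) : b ⊆ (comp J P q).biUnion J := by
  intro y hy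
  have hyU : y ∈ Finset.univ.biUnion J := by
    rw [← hP]; exact Finset.mem_biUnion.mpr ⟨b, hb, hy⟩
  obtain ⟨r, -, hyr⟩ := Finset.mem_biUnion.mp hyU
  refine Finset.mem_biUnion.mpr ⟨r, mem_comp.mpr ?_, hyr⟩
  exact Relation.ReflTransGen.single ⟨b, hb, hq, ⟨y, Finset.mem_inter.mpr ⟨hy, hyr⟩⟩⟩

def QA (J : Fin mm → Finset ℕ) (P : Finset (Finset ℕ)) (A : Finset (Fin mm)) :
    Finset (Finset ℕ) :=
  P.filter (fun b => b ⊆ A.biUnion J)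

/-- For a partition `P` of the whole union, `QA P (comp q)` is a partition of the
union over the component of `q`. -/
lemma QA_mem_partitionsOf {P : Finset (Finset ℕ)}
    (hP : P ∈ partitionsOf (Finset.univ.biUnion J)) (q : Fin mm) :
    QA J P (comp J P q) ∈ partitionsOf ((comp J P q).biUnion J) := by
  rw [mem_partitionsOf] at hP ⊢
  obtain ⟨hne, hdis, hun⟩ := hP
  refine ⟨fun h => hne (Finset.mem_filter.mp h).1, ?_, ?_⟩
  · intro a ha b hb hab
    exact hdis a (Finset.mem_filter.mp ha).1 b (Finset.mem_filter.mp hb).1 hab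
  · apply Finset.Subset.antisymm
    · intro x hx
      obtain ⟨b, hb, hxb⟩ := Finset.mem_biUnion.mp hx
      exact (Finset.mem_filter.mp hb).2 hxb
    · intro x hx
      obtain ⟨r, hr, hxr⟩ := Finset.mem_biUnion.mp hx
      have hxU : x ∈ P.biUnion id := by
        rw [hun]; exact Finset.mem_biUnion.mpr ⟨r, Finset.mem_univ r, hxr⟩
      obtain ⟨b, hb, hxb⟩ := Finset.mem_biUnion.mp hxU
      have hsub : b ⊆ (comp J P r).biUnion J :=
        block_subset_comp hun hb ⟨x, Finset.mem_inter.mpr ⟨hxb, hxr⟩⟩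
      rw [← comp_eq_of_rel (mem_comp.mp hr)] at hsub
      exact Finset.mem_biUnion.mpr ⟨b, Finset.mem_filter.mpr ⟨hb, hsub⟩, hxb⟩

end Aux2

section Aux3
variable {mm : ℕ} {J : Fin mm → Finset ℕ}
  (hdisj : ∀ l l', l ≠ l' → J l ∩ J l' = ∅)

include hdisj in
lemma QA_connected {P : Finset (Finset ℕ)}
    (hP : P ∈ partitionsOf (Finset.univ.biUnion J)) (q : Fin mm) :
    ¬ ∃ S ∈ (QA J P (comp J P q)).powerset, ∃ B ∈ (comp J P q).powerset,
      S.Nonempty ∧ S ≠ QA J P (comp J P q) ∧ B.Nonempty ∧ B ≠ comp J P q ∧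
      S.biUnion id = B.biUnion J := by
  rw [mem_partitionsOf] at hP
  obtain ⟨hne, hdis, hun⟩ := hP
  rintro ⟨S, hS, B, hB, hSne, hSneq, hBne, hBneq, hSB⟩
  rw [Finset.mem_powerset] at hS hB
  -- B is closed under prel
  have key : ∀ s t : Fin mm, s ∈ B → prel J P s t → t ∈ B := by
    intro s t hs h
    induction h with
    | refl => exact hs
    | tail h1 h2 ih =>
      rename_i t' t
      obtain ⟨b, hb, hb1, hb2⟩ := h2
      have ht'A : prel J P q t' := mem_comp.mp (hB ih)
      have hbsub : b ⊆ (comp J P q).biUnion J := by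
        rw [comp_eq_of_rel ht'A]
        exact block_subset_comp hun hb hb1
      have hbQA : b ∈ QA J P (comp J P q) := Finset.mem_filter.mpr ⟨hb, hbsub⟩
      by_cases hbS : b ∈ S
      · obtain ⟨x, hx⟩ := hb2
        rw [Finset.mem_inter] at hx
        have : x ∈ B.biUnion J := by
          rw [← hSB]
          exact Finset.mem_biUnion.mpr ⟨b, hbS, hx.1⟩
        obtain ⟨r'', hr'', hxr''⟩ := Finset.mem_biUnion.mp this
        rwa [idx_unique hdisj hx.2 hxr'']
      · exfalso
        obtain ⟨x, hx⟩ := hb1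
        rw [Finset.mem_inter] at hx
        have hxB : x ∈ B.biUnion J := Finset.mem_biUnion.mpr ⟨t', ih, hx.2⟩
        rw [← hSB] at hxB
        obtain ⟨c, hcS, hxc⟩ := Finset.mem_biUnion.mp hxB
        have hcP : c ∈ P := (Finset.mem_filter.mp (hS hcS)).1
        have hcb : c ≠ b := fun h => hbS (h ▸ hcS)
        have := hdis c hcP b hb hcb
        have : x ∈ c ∩ b := Finset.mem_inter.mpr ⟨hxc, hx.1⟩
        rw [hdis c hcP b hb hcb] at this
        exact absurd this (Finset.notMem_empty x)
  obtain ⟨r, hr⟩ := hBne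
  obtain ⟨r', hr'A, hr'B⟩ := Finset.exists_of_ssubset (Finset.ssubset_iff_subset_ne.mpr ⟨hB, hBneq⟩)
  have : prel J P r r' :=
    prel_trans J P (prel_symm J P (mem_comp.mp (hB hr))) (mem_comp.mp hr'A)
  exact hr'B (key r r' hr this)

end Aux3

section Aux4
variable {mm : ℕ} {J : Fin mm → Finset ℕ}
  (hdisj : ∀ l l', l ≠ l' → J l ∩ J l' = ∅)
  (hJne : ∀ l, (J l).Nonempty)
  {I : Finset (Finset (Fin mm))}
  (hI : I ∈ partitionsOf (Finset.univ : Finset (Fin mm)))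
  {p : (A : Finset (Fin mm)) → A ∈ I → Finset (Finset ℕ)}
  (hp : ∀ A (hA : A ∈ I), p A hA ∈ partitionsOf (A.biUnion J))
  (hpc : ∀ A (hA : A ∈ I), ¬ ∃ S ∈ (p A hA).powerset, ∃ B ∈ A.powerset,
      S.Nonempty ∧ S ≠ p A hA ∧ B.Nonempty ∧ B ≠ A ∧ S.biUnion id = B.biUnion J)

lemma p_irrel {A A' : Finset (Fin mm)} (h : A = A') (hA : A ∈ I) (hA' : A' ∈ I) :
    p A hA = p A' hA' := by subst h; rfl

lemma mem_glue {b : Finset ℕ} :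
    b ∈ I.attach.biUnion (fun x => p x.1 x.2) ↔ ∃ A, ∃ hA : A ∈ I, b ∈ p A hA := by
  simp only [Finset.mem_biUnion, Finset.mem_attach, true_and]
  exact ⟨fun ⟨x, hx⟩ => ⟨x.1, x.2, hx⟩, fun ⟨A, hA, hb⟩ => ⟨⟨A, hA⟩, hb⟩⟩

include hp in
lemma glue_block_subset {A : Finset (Fin mm)} (hA : A ∈ I) {b : Finset ℕ}
    (hb : b ∈ p A hA) : b ⊆ A.biUnion J := by
  have := (mem_partitionsOf.mp (hp A hA)).2.2
  rw [← this]
  exact Finset.subset_biUnion_of_mem id hb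

include hdisj hI hp in
lemma glue_block_unique {A A' : Finset (Fin mm)} (hA : A ∈ I) (hA' : A' ∈ I)
    {b : Finset ℕ} (hb : b ∈ p A hA) (hb' : b ∈ p A' hA') : A = A' := by
  have hbne : b.Nonempty := by
    rcases Finset.eq_empty_or_nonempty b with h | h
    · exact absurd (h ▸ hb) (fun hh => (mem_partitionsOf.mp (hp A hA)).1 hh)
    · exact h
  obtain ⟨x, hx⟩ := hbne
  obtain ⟨r, hr, hxr⟩ := Finset.mem_biUnion.mp (glue_block_subset hp hA hb hx)
  obtain ⟨r', hr', hxr'⟩ := Finset.mem_biUnion.mp (glue_block_subset hp hA' hb' hx)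
  have hrr : r = r' := idx_unique hdisj hxr hxr'
  subst hrr
  by_contra hAA
  have := (mem_partitionsOf.mp hI).2.1 A hA A' hA' hAA
  have hmem : r ∈ A ∩ A' := Finset.mem_inter.mpr ⟨hr, hr'⟩
  rw [this] at hmem
  exact absurd hmem (Finset.notMem_empty r)

include hdisj hI hp in
lemma glue_mem_partitionsOf :
    I.attach.biUnion (fun x => p x.1 x.2) ∈ partitionsOf (Finset.univ.biUnion J) := by
  obtain ⟨hIne, hIdis, hIun⟩ := mem_partitionsOf.mp hI
  rw [mem_partitionsOf]
  refine ⟨?_, ?_, ?_⟩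
  · intro h
    obtain ⟨A, hA, hb⟩ := mem_glue.mp h
    exact (mem_partitionsOf.mp (hp A hA)).1 hb
  · intro a ha b hb hab
    obtain ⟨A, hA, hpa⟩ := mem_glue.mp ha
    obtain ⟨A', hA', hpb⟩ := mem_glue.mp hb
    by_cases hAA : A = A'
    · subst hAA
      exact (mem_partitionsOf.mp (hp A hA)).2.1 a hpa b hpb hab
    · rw [Finset.eq_empty_iff_forall_notMem]
      intro x hx
      rw [Finset.mem_inter] at hx
      have h1 := glue_block_subset hp hA hpa hx.1
      have h2 := glue_block_subset hp hA' hpb hx.2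
      exact biUnion_disj hdisj (hIdis A hA A' hA' hAA) h1 h2
  · apply Finset.Subset.antisymm
    · intro x hx
      obtain ⟨b, hb, hxb⟩ := Finset.mem_biUnion.mp hx
      obtain ⟨A, hA, hpb⟩ := mem_glue.mp hb
      obtain ⟨r, _, hxr⟩ := Finset.mem_biUnion.mp (glue_block_subset hp hA hpb hxb)
      exact Finset.mem_biUnion.mpr ⟨r, Finset.mem_univ r, hxr⟩
    · intro x hx
      obtain ⟨r, -, hxr⟩ := Finset.mem_biUnion.mp hx
      have hr : r ∈ I.biUnion id := by rw [hIun]; exact Finset.mem_univ r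
      obtain ⟨A, hA, hrA⟩ := Finset.mem_biUnion.mp hr
      have hxA : x ∈ (p A hA).biUnion id := by
        rw [(mem_partitionsOf.mp (hp A hA)).2.2]
        exact Finset.mem_biUnion.mpr ⟨r, hrA, hxr⟩
      obtain ⟨b, hb, hxb⟩ := Finset.mem_biUnion.mp hxA
      exact Finset.mem_biUnion.mpr ⟨b, mem_glue.mpr ⟨A, hA, hb⟩, hxb⟩

include hdisj hI hp in
lemma glue_rel_mem {q j : Fin mm}
    (h : prel J (I.attach.biUnion (fun x => p x.1 x.2)) q j)
    {A : Finset (Fin mm)} (hA : A ∈ I) (hq : q ∈ A) : j ∈ A := by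
  obtain ⟨hIne, hIdis, hIun⟩ := mem_partitionsOf.mp hI
  induction h with
  | refl => exact hq
  | tail h1 h2 ih =>
    rename_i t' t
    obtain ⟨b, hb, hb1, hb2⟩ := h2
    obtain ⟨A', hA', hpb⟩ := mem_glue.mp hb
    obtain ⟨x, hx⟩ := hb1
    rw [Finset.mem_inter] at hx
    have ht'A' : t' ∈ A' := idx_mem hdisj (glue_block_subset hp hA' hpb) hx.1 hx.2
    obtain ⟨y, hy⟩ := hb2
    rw [Finset.mem_inter] at hy
    have htA' : t ∈ A' := idx_mem hdisj (glue_block_subset hp hA' hpb) hy.1 hy.2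
    have : A = A' := by
      by_contra hAA
      have hmem : t' ∈ A ∩ A' := Finset.mem_inter.mpr ⟨ih, ht'A'⟩
      rw [hIdis A hA A' hA' hAA] at hmem
      exact absurd hmem (Finset.notMem_empty t')
    rw [this]
    exact htA'

include hdisj hJne hI hp hpc in
lemma glue_rel_of_mem {A : Finset (Fin mm)} (hA : A ∈ I) {q j : Fin mm}
    (hq : q ∈ A) (hj : j ∈ A) :
    prel J (I.attach.biUnion (fun x => p x.1 x.2)) q j := by
  classical
  set G := I.attach.biUnion (fun x => p x.1 x.2) with hG
  set B := Finset.filter (fun r => prel J G q r) A with hBdef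
  have hBA : B ⊆ A := Finset.filter_subset _ _
  have hqB : q ∈ B := by
    rw [hBdef, Finset.mem_filter]
    exact ⟨hq, prel_refl _ _ _⟩
  have hmemB : ∀ r, r ∈ B ↔ r ∈ A ∧ prel J G q r := by
    intro r; rw [hBdef, Finset.mem_filter]
  -- blocks meeting `B`'s union lie inside `B`'s union
  have H : ∀ b ∈ p A hA, ∀ r ∈ B, (b ∩ J r).Nonempty → b ⊆ B.biUnion J := by
    intro b hb r hrB hbr y hy
    obtain ⟨r', hr', hyr'⟩ := Finset.mem_biUnion.mp (glue_block_subset hp hA hb hy)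
    have hstep : pstep J G r r' :=
      ⟨b, mem_glue.mpr ⟨A, hA, hb⟩, hbr, ⟨y, Finset.mem_inter.mpr ⟨hy, hyr'⟩⟩⟩
    have : prel J G q r' :=
      prel_trans J G ((hmemB r).mp hrB).2 (Relation.ReflTransGen.single hstep)
    exact Finset.mem_biUnion.mpr ⟨r', (hmemB r').mpr ⟨hr', this⟩, hyr'⟩
  have hcover : ∀ r ∈ B, ∀ x ∈ J r, ∃ b ∈ p A hA, x ∈ b ∧ b ⊆ B.biUnion J := by
    intro r hrB x hxr
    have hxA : x ∈ (p A hA).biUnion id := by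
      rw [(mem_partitionsOf.mp (hp A hA)).2.2]
      exact Finset.mem_biUnion.mpr ⟨r, hBA hrB, hxr⟩
    obtain ⟨b, hb, hxb⟩ := Finset.mem_biUnion.mp hxA
    exact ⟨b, hb, hxb, H b hb r hrB ⟨x, Finset.mem_inter.mpr ⟨hxb, hxr⟩⟩⟩
  have hBeqA : B = A := by
    by_contra hBneA
    apply hpc A hA
    set S := (p A hA).filter (fun b => b ⊆ B.biUnion J) with hSdef
    refine ⟨S, Finset.mem_powerset.mpr (Finset.filter_subset _ _),
      B, Finset.mem_powerset.mpr hBA, ?_, ?_, ⟨q, hqB⟩, hBneA, ?_⟩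
    · obtain ⟨x, hxq⟩ := hJne q
      obtain ⟨b, hb, hxb, hbB⟩ := hcover q hqB x hxq
      exact ⟨b, Finset.mem_filter.mpr ⟨hb, hbB⟩⟩
    · obtain ⟨r', hr'A, hr'B⟩ :=
        Finset.exists_of_ssubset (Finset.ssubset_iff_subset_ne.mpr ⟨hBA, hBneA⟩)
      obtain ⟨x, hxr'⟩ := hJne r'
      have hxA : x ∈ (p A hA).biUnion id := by
        rw [(mem_partitionsOf.mp (hp A hA)).2.2]
        exact Finset.mem_biUnion.mpr ⟨r', hr'A, hxr'⟩
      obtain ⟨b, hb, hxb⟩ := Finset.mem_biUnion.mp hxA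
      intro heq
      have hbS : b ∈ S := heq ▸ hb
      have hbB : b ⊆ B.biUnion J := (Finset.mem_filter.mp hbS).2
      obtain ⟨r'', hr''B, hxr''⟩ := Finset.mem_biUnion.mp (hbB hxb)
      rw [idx_unique hdisj hxr' hxr''] at hr'B
      exact hr'B hr''B
    · apply Finset.Subset.antisymm
      · intro x hx
        obtain ⟨b, hb, hxb⟩ := Finset.mem_biUnion.mp hx
        exact (Finset.mem_filter.mp hb).2 hxb
      · intro x hx
        obtain ⟨r, hrB, hxr⟩ := Finset.mem_biUnion.mp hx
        obtain ⟨b, hb, hxb, hbB⟩ := hcover r hrB x hxr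
        exact Finset.mem_biUnion.mpr ⟨b, Finset.mem_filter.mpr ⟨hb, hbB⟩, hxb⟩
  have : j ∈ B := hBeqA ▸ hj
  exact ((hmemB j).mp this).2

include hdisj hJne hI hp hpc in
lemma glue_comp_eq {A : Finset (Fin mm)} (hA : A ∈ I) {q : Fin mm} (hq : q ∈ A) :
    comp J (I.attach.biUnion (fun x => p x.1 x.2)) q = A := by
  ext j
  rw [mem_comp]
  exact ⟨fun h => glue_rel_mem hdisj hI hp h hA hq,
    fun h => glue_rel_of_mem hdisj hJne hI hp hpc hA hq h⟩

include hdisj hJne hI hp hpc in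
lemma glue_compPart : compPart J (I.attach.biUnion (fun x => p x.1 x.2)) = I := by
  obtain ⟨hIne, hIdis, hIun⟩ := mem_partitionsOf.mp hI
  ext A'
  rw [compPart, Finset.mem_image]
  constructor
  · rintro ⟨q, -, hq⟩
    have : q ∈ I.biUnion id := by rw [hIun]; exact Finset.mem_univ q
    obtain ⟨A, hA, hqA⟩ := Finset.mem_biUnion.mp this
    rwa [← hq, glue_comp_eq hdisj hJne hI hp hpc hA hqA]
  · intro hA'
    have hA'ne : A'.Nonempty := by
      rcases Finset.eq_empty_or_nonempty A' with h | h
      · exact absurd (h ▸ hA') hIne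
      · exact h
    obtain ⟨q, hq⟩ := hA'ne
    exact ⟨q, Finset.mem_univ q, glue_comp_eq hdisj hJne hI hp hpc hA' hq⟩

include hdisj hI hp in
lemma glue_QA {A : Finset (Fin mm)} (hA : A ∈ I) :
    QA J (I.attach.biUnion (fun x => p x.1 x.2)) A = p A hA := by
  ext b
  rw [QA, Finset.mem_filter]
  constructor
  · rintro ⟨hbG, hbA⟩
    obtain ⟨A', hA', hpb⟩ := mem_glue.mp hbG
    have hbne : b.Nonempty := by
      rcases Finset.eq_empty_or_nonempty b with h | h
      · exact absurd (h ▸ hpb) (fun hh => (mem_partitionsOf.mp (hp A' hA')).1 hh)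
      · exact h
    obtain ⟨x, hx⟩ := hbne
    obtain ⟨r, hr, hxr⟩ := Finset.mem_biUnion.mp (hbA hx)
    have hrA' : r ∈ A' := idx_mem hdisj (glue_block_subset hp hA' hpb) hx hxr
    have : A = A' := by
      by_contra hAA
      have hmem : r ∈ A ∩ A' := Finset.mem_inter.mpr ⟨hr, hrA'⟩
      rw [(mem_partitionsOf.mp hI).2.1 A hA A' hA' hAA] at hmem
      exact absurd hmem (Finset.notMem_empty r)
    subst this
    exact hpb
  · intro hb
    exact ⟨mem_glue.mpr ⟨A, hA, hb⟩, glue_block_subset hp hA hb⟩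

include hdisj hI hp in
lemma glue_prod (T : Finset ℕ → ℝ) :
    ∏ b ∈ I.attach.biUnion (fun x => p x.1 x.2), T b
      = ∏ x ∈ I.attach, ∏ b ∈ p x.1 x.2, T b := by
  apply Finset.prod_biUnion
  intro x _ y _ hxy
  simp only [Function.onFun]
  rw [Finset.disjoint_left]
  intro b hbx hby
  apply hxy
  exact Subtype.ext (glue_block_unique hdisj hI hp x.2 y.2 hbx hby)

end Aux4

section Aux5
variable {mm : ℕ} {J : Fin mm → Finset ℕ}

lemma QA_glue {P : Finset (Finset ℕ)} (hP : P ∈ partitionsOf (Finset.univ.biUnion J)) :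
    (compPart J P).attach.biUnion (fun x => QA J P x.1) = P := by
  obtain ⟨hne, hdis, hun⟩ := mem_partitionsOf.mp hP
  apply Finset.Subset.antisymm
  · intro b hb
    obtain ⟨x, -, hbx⟩ := Finset.mem_biUnion.mp hb
    exact (Finset.mem_filter.mp hbx).1
  · intro b hb
    have hbne : b.Nonempty := by
      rcases Finset.eq_empty_or_nonempty b with h | h
      · exact absurd (h ▸ hb) hne
      · exact h
    obtain ⟨x, hx⟩ := hbne
    have hxU : x ∈ Finset.univ.biUnion J := by
      rw [← hun]; exact Finset.mem_biUnion.mpr ⟨b, hb, hx⟩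
    obtain ⟨q, -, hxq⟩ := Finset.mem_biUnion.mp hxU
    have hsub : b ⊆ (comp J P q).biUnion J :=
      block_subset_comp hun hb ⟨x, Finset.mem_inter.mpr ⟨hx, hxq⟩⟩
    refine Finset.mem_biUnion.mpr
      ⟨⟨comp J P q, Finset.mem_image_of_mem _ (Finset.mem_univ q)⟩, Finset.mem_attach _ _, ?_⟩
    exact Finset.mem_filter.mpr ⟨hb, hsub⟩

end Aux5

theorem moment_factorization_over_connected (mm : ℕ) (hmm : 0 < mm)
    (J : Fin mm → Finset ℕ) (hJne : ∀ l, (J l).Nonempty)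
    (hdisj : ∀ l l', l ≠ l' → J l ∩ J l' = ∅)
    (m T : Finset ℕ → ℝ)
    (hT : ∀ S : Finset ℕ, S.Nonempty → m S = ∑ P ∈ partitionsOf S, ∏ b ∈ P, T b) :
    m (Finset.univ.biUnion J) =
      ∑ I ∈ partitionsOf (Finset.univ : Finset (Fin mm)),
        ∏ A ∈ I,
          ∑ Q ∈ (partitionsOf (A.biUnion J)).filter
              (fun Q => ¬ ∃ S ∈ Q.powerset, ∃ B ∈ A.powerset,
                S.Nonempty ∧ S ≠ Q ∧ B.Nonempty ∧ B ≠ A ∧ S.biUnion id = B.biUnion J),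
            ∏ b ∈ Q, T b := by
  classical
  have hUne : (Finset.univ.biUnion J).Nonempty := by
    obtain ⟨x, hx⟩ := hJne ⟨0, hmm⟩
    exact ⟨x, Finset.mem_biUnion.mpr ⟨⟨0, hmm⟩, Finset.mem_univ _, hx⟩⟩
  rw [hT _ hUne]
  rw [show (∑ I ∈ partitionsOf (Finset.univ : Finset (Fin mm)),
        ∏ A ∈ I, ∑ Q ∈ (partitionsOf (A.biUnion J)).filter
              (fun Q => ¬ ∃ S ∈ Q.powerset, ∃ B ∈ A.powerset,
                S.Nonempty ∧ S ≠ Q ∧ B.Nonempty ∧ B ≠ A ∧ S.biUnion id = B.biUnion J),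
            ∏ b ∈ Q, T b)
      = ∑ I ∈ partitionsOf (Finset.univ : Finset (Fin mm)),
          ∑ p ∈ I.pi (fun A => (partitionsOf (A.biUnion J)).filter
              (fun Q => ¬ ∃ S ∈ Q.powerset, ∃ B ∈ A.powerset,
                S.Nonempty ∧ S ≠ Q ∧ B.Nonempty ∧ B ≠ A ∧ S.biUnion id = B.biUnion J)),
            ∏ x ∈ I.attach, ∏ b ∈ p x.1 x.2, T b
      from Finset.sum_congr rfl (fun I _ => Finset.prod_sum _ _ _)]
  rw [← Finset.sum_fiberwise_of_maps_to (g := compPart J)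
    (t := partitionsOf (Finset.univ : Finset (Fin mm)))
    (fun P _ => compPart_mem J P) (fun P => ∏ b ∈ P, T b)]
  apply Finset.sum_congr rfl
  intro I hI
  refine Finset.sum_nbij' (fun P => fun A _ => QA J P A)
    (fun p => I.attach.biUnion (fun x => p x.1 x.2)) ?_ ?_ ?_ ?_ ?_
  · intro P hP'
    obtain ⟨hP, hcp⟩ := Finset.mem_filter.mp hP'
    rw [Finset.mem_pi]
    intro A hA
    rw [← hcp] at hA
    obtain ⟨q, -, rfl⟩ := Finset.mem_image.mp hA
    exact Finset.mem_filter.mpr ⟨QA_mem_partitionsOf hP q, QA_connected hdisj hP q⟩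
  · intro p hp'
    rw [Finset.mem_pi] at hp'
    have hp1 : ∀ A (hA : A ∈ I), p A hA ∈ partitionsOf (A.biUnion J) :=
      fun A hA => (Finset.mem_filter.mp (hp' A hA)).1
    have hp2 : ∀ A (hA : A ∈ I), ¬ ∃ S ∈ (p A hA).powerset, ∃ B ∈ A.powerset,
        S.Nonempty ∧ S ≠ p A hA ∧ B.Nonempty ∧ B ≠ A ∧ S.biUnion id = B.biUnion J :=
      fun A hA => (Finset.mem_filter.mp (hp' A hA)).2
    exact Finset.mem_filter.mpr ⟨glue_mem_partitionsOf hdisj hI hp1,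
      glue_compPart hdisj hJne hI hp1 hp2⟩
  · intro P hP'
    obtain ⟨hP, hcp⟩ := Finset.mem_filter.mp hP'
    subst hcp
    exact QA_glue hP
  · intro p hp'
    rw [Finset.mem_pi] at hp'
    have hp1 : ∀ A (hA : A ∈ I), p A hA ∈ partitionsOf (A.biUnion J) :=
      fun A hA => (Finset.mem_filter.mp (hp' A hA)).1
    funext A hA
    exact glue_QA hdisj hI hp1 hA
  · intro P hP'
    obtain ⟨hP, hcp⟩ := Finset.mem_filter.mp hP'
    subst hcp
    have hp1 : ∀ A (hA : A ∈ compPart J P), QA J P A ∈ partitionsOf (A.biUnion J) := by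
      intro A hA
      obtain ⟨q, -, rfl⟩ := Finset.mem_image.mp hA
      exact QA_mem_partitionsOf hP q
    conv_lhs => rw [← QA_glue hP]
    exact glue_prod hdisj (compPart_mem J P) hp1 T
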